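/- Let S be a Dedekind domain, R a subring of S that is a Dedekind domain, I an ideal of S with I ∩ R ≠ {0}, and M a prime ideal of S containing I. For each prime ideal Q of S containing I, set e_Q = v_Q((Q ∩ R)S). Then (I :_R M) ⊆ I if and only if e_M does not divide v_M(I) − 1, or (v_M(I) − 1)/e_M < v_Q(I)/e_Q for some prime ideal Q ≠ M of S containing I with Q ∩ R = M ∩ R. -/

import Mathlib

/-- The `P`-adic exponent `v_P(A)` of an ideal `A`: the largest `l ∈ ℕ` such that
`A ⊆ P ^ l`. -/
noncomputable def padicExp {D : Type*} [CommRing D] (P A : Ideal D) : ℕ :=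
  sSup {l : ℕ | A ≤ P ^ l}

open UniqueFactorizationMonoid

section Helpers

variable {D : Type*} [CommRing D] [IsDomain D] [IsDedekindDomain D]

theorem padicExp_eq_count [DecidableEq (Ideal D)] {Q A : Ideal D} (hQ : Q.IsPrime)
    (hQ0 : Q ≠ ⊥) (hA : A ≠ ⊥) :
    padicExp Q A = (normalizedFactors A).count Q := by
  have hirr : Irreducible Q := (Ideal.prime_of_isPrime hQ0 hQ).irreducible
  have hcount : ∀ m : ℕ, A ≤ Q ^ m ↔ m ≤ (normalizedFactors A).count Q := by
    intro m
    rw [← Ideal.dvd_iff_le,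
      dvd_iff_normalizedFactors_le_normalizedFactors (pow_ne_zero m hQ0) hA,
      hirr.normalizedFactors_pow, normalize_eq, ← Multiset.le_count_iff_replicate_le]
  have : {l : ℕ | A ≤ Q ^ l} = Set.Iic ((normalizedFactors A).count Q) :=
    Set.ext fun l => hcount l
  rw [padicExp, this, csSup_Iic]

theorem le_pow_padicExp_iff {Q A : Ideal D} (hQ : Q.IsPrime) (hQ0 : Q ≠ ⊥) (hA : A ≠ ⊥)
    {n : ℕ} : A ≤ Q ^ n ↔ n ≤ padicExp Q A := by
  classical
  have hirr : Irreducible Q := (Ideal.prime_of_isPrime hQ0 hQ).irreducible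
  rw [padicExp_eq_count hQ hQ0 hA, ← Ideal.dvd_iff_le,
    dvd_iff_normalizedFactors_le_normalizedFactors (pow_ne_zero n hQ0) hA,
    hirr.normalizedFactors_pow, normalize_eq, ← Multiset.le_count_iff_replicate_le]

theorem le_pow_padicExp {Q A : Ideal D} (hQ : Q.IsPrime) (hQ0 : Q ≠ ⊥) (hA : A ≠ ⊥) :
    A ≤ Q ^ padicExp Q A :=
  (le_pow_padicExp_iff hQ hQ0 hA).mpr le_rfl

theorem padicExp_mono {Q A B : Ideal D} (hQ : Q.IsPrime) (hQ0 : Q ≠ ⊥) (hA : A ≠ ⊥)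
    (h : A ≤ B) : padicExp Q B ≤ padicExp Q A := by
  have hB : B ≠ ⊥ := fun hb => hA (le_bot_iff.mp (hb ▸ h))
  exact (le_pow_padicExp_iff hQ hQ0 hA).mp (h.trans (le_pow_padicExp hQ hQ0 hB))

theorem padicExp_mul {Q A B : Ideal D} (hQ : Q.IsPrime) (hQ0 : Q ≠ ⊥) (hA : A ≠ ⊥)
    (hB : B ≠ ⊥) : padicExp Q (A * B) = padicExp Q A + padicExp Q B := by
  classical
  rw [padicExp_eq_count hQ hQ0 hA, padicExp_eq_count hQ hQ0 hB,
    padicExp_eq_count hQ hQ0 (mul_ne_zero hA hB), normalizedFactors_mul hA hB,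
    Multiset.count_add]

theorem padicExp_pow {Q A : Ideal D} (hQ : Q.IsPrime) (hQ0 : Q ≠ ⊥) (hA : A ≠ ⊥) (j : ℕ) :
    padicExp Q (A ^ j) = j * padicExp Q A := by
  classical
  rw [padicExp_eq_count hQ hQ0 hA, padicExp_eq_count hQ hQ0 (pow_ne_zero j hA),
    normalizedFactors_pow, Multiset.count_nsmul]

theorem padicExp_self {Q : Ideal D} (hQ : Q.IsPrime) (hQ0 : Q ≠ ⊥) :
    padicExp Q Q = 1 := by
  classical
  have hirr : Irreducible Q := (Ideal.prime_of_isPrime hQ0 hQ).irreducible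
  rw [padicExp_eq_count hQ hQ0 hQ0, normalizedFactors_irreducible hirr, normalize_eq,
    Multiset.count_singleton_self]

theorem padicExp_pos {Q A : Ideal D} (hQ : Q.IsPrime) (hQ0 : Q ≠ ⊥) (hA : A ≠ ⊥)
    (h : A ≤ Q) : 1 ≤ padicExp Q A :=
  (le_pow_padicExp_iff hQ hQ0 hA).mp (by rwa [pow_one])

theorem padicExp_eq_zero {Q A : Ideal D} (hQ : Q.IsPrime) (hQ0 : Q ≠ ⊥) (hA : A ≠ ⊥)
    (h : ¬ A ≤ Q) : padicExp Q A = 0 := by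
  by_contra hne
  have h1 := (le_pow_padicExp_iff (n := 1) hQ hQ0 hA).mpr (Nat.one_le_iff_ne_zero.mpr hne)
  rw [pow_one] at h1
  exact h h1

theorem le_of_padicExp_le {A B : Ideal D} (hA : A ≠ ⊥) (hB : B ≠ ⊥)
    (h : ∀ Q : Ideal D, Q.IsPrime → Q ≠ ⊥ → padicExp Q B ≤ padicExp Q A) : A ≤ B := by
  classical
  rw [← Ideal.dvd_iff_le, dvd_iff_normalizedFactors_le_normalizedFactors hB hA,
    Multiset.le_iff_count]
  intro Q
  by_cases hQ : Q ∈ normalizedFactors B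
  · have hp : Prime Q := prime_of_normalized_factor Q hQ
    have hQ0 : Q ≠ ⊥ := hp.ne_zero
    have hQp : Q.IsPrime := Ideal.isPrime_of_prime hp
    rw [← padicExp_eq_count hQp hQ0 hB, ← padicExp_eq_count hQp hQ0 hA]
    exact h Q hQp hQ0
  · simp [Multiset.count_eq_zero_of_notMem hQ]

end Helpers

attribute [irreducible] padicExp

section Key

variable {S : Type*} [CommRing S] [IsDomain S] [IsDedekindDomain S]
  (R : Subring S) [IsDedekindDomain ↥R]

theorem subtype_inj : Function.Injective ⇑R.subtype := by
  rw [Subring.coe_subtype]; exact Subtype.coe_injective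

/-- Key computation: for `0 ≠ y ∈ R` and a prime `Q` of `S` lying over a nonzero prime of
`R`, the `Q`-adic exponent of `yS` is `e_Q` times the `(Q ∩ R)`-adic exponent of `yR`. -/
theorem padicExp_span_coe {Q : Ideal S} (hQ : Q.IsPrime) (hQ0 : Q ≠ ⊥)
    (hQR : Q.comap R.subtype ≠ ⊥) {y : ↥R} (hy : y ≠ 0) :
    padicExp Q (Ideal.span {(y : S)}) =
      padicExp Q (Ideal.map R.subtype (Q.comap R.subtype)) *
        padicExp (Q.comap R.subtype) (Ideal.span {y}) := by
  have hf := subtype_inj R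
  set f := R.subtype
  set P : Ideal ↥R := Q.comap f with hP_def
  have hPp : P.IsPrime := Ideal.IsPrime.comap f
  set k := padicExp P (Ideal.span {y}) with hk_def
  have hspan0 : Ideal.span {y} ≠ (⊥ : Ideal ↥R) := by
    rwa [Ne, Ideal.span_singleton_eq_bot]
  have h1 : Ideal.span {y} ≤ P ^ k := le_pow_padicExp hPp hQR hspan0
  obtain ⟨C, hC⟩ : P ^ k ∣ Ideal.span {y} := Ideal.dvd_iff_le.mpr h1
  have hC0 : C ≠ ⊥ := by
    intro h
    exact hspan0 (by simpa [h] using hC)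
  have hPk0 : P ^ k ≠ (⊥ : Ideal ↥R) := pow_ne_zero k hQR
  have hkC : padicExp P C = 0 := by
    have h2 : padicExp P (Ideal.span {y}) = padicExp P (P ^ k) + padicExp P C := by
      rw [hC, padicExp_mul hPp hQR hPk0 hC0]
    rw [padicExp_pow hPp hQR hQR, padicExp_self hPp hQR, mul_one] at h2
    omega
  have hCP : ¬ C ≤ P := by
    intro h
    have := padicExp_pos hPp hQR hC0 h
    omega
  have hCQ : ¬ Ideal.map f C ≤ Q := fun h => hCP (Ideal.map_le_iff_le_comap.mp h)
  have himage : Ideal.span {(y : S)} = (Ideal.map f P) ^ k * Ideal.map f C := by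
    have : Ideal.map f (Ideal.span {y}) = Ideal.span {(y : S)} := by
      rw [Ideal.map_span, Set.image_singleton]
      rfl
    rw [← this, hC, Ideal.map_mul, Ideal.map_pow]
  have hmapP : Ideal.map f P ≠ (⊥ : Ideal S) := by
    rwa [Ne, Ideal.map_eq_bot_iff_of_injective hf]
  have hmapC : Ideal.map f C ≠ (⊥ : Ideal S) := by
    rwa [Ne, Ideal.map_eq_bot_iff_of_injective hf]
  rw [himage, padicExp_mul hQ hQ0 (pow_ne_zero k hmapP) hmapC,
    padicExp_pow hQ hQ0 hmapP, padicExp_eq_zero hQ hQ0 hmapC hCQ, add_zero, mul_comm]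

end Key

set_option maxHeartbeats 2000000 in
/-- Let `S` and `R ⊆ S` be Dedekind domains, `I` an ideal of `S` with `I ∩ R ≠ 0`, and `M`
a prime ideal of `S` containing `I`. With `e_Q = v_Q((Q ∩ R)S)`, we have `(I :_R M) ⊆ I`
if and only if `e_M ∤ (v_M(I) - 1)`, or `(v_M(I) - 1)/e_M < v_Q(I)/e_Q` for some prime
ideal `Q ≠ M` of `S` containing `I` with `Q ∩ R = M ∩ R`. -/
theorem stmt_17 {S : Type*} [CommRing S] [IsDomain S] [IsDedekindDomain S]
    (R : Subring S) [IsDedekindDomain ↥R] (I : Ideal S)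
    (hI : I.comap R.subtype ≠ ⊥) (M : Ideal S) (hM : M.IsPrime) (hIM : I ≤ M) :
    {x : S | x ∈ R ∧ ∀ m ∈ M, x * m ∈ I} ⊆ (I : Set S) ↔
      (¬ ((padicExp M (Ideal.map R.subtype (M.comap R.subtype)) : ℤ) ∣
            (padicExp M I : ℤ) - 1) ∨
        ∃ Q : Ideal S, Q.IsPrime ∧ I ≤ Q ∧ Q ≠ M ∧
          Q.comap R.subtype = M.comap R.subtype ∧
          ((padicExp M I : ℚ) - 1) /
              (padicExp M (Ideal.map R.subtype (M.comap R.subtype)) : ℚ) <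
            (padicExp Q I : ℚ) /
              (padicExp Q (Ideal.map R.subtype (Q.comap R.subtype)) : ℚ)) := by
  classical
  have hf := subtype_inj R
  have hI0 : I ≠ ⊥ := by
    intro h
    exact hI (by rw [h]; exact Ideal.comap_bot_of_injective R.subtype hf)
  have hM0 : M ≠ ⊥ := fun h => hI0 (le_bot_iff.mp (h ▸ hIM))
  have hP0p : (M.comap R.subtype).IsPrime := Ideal.IsPrime.comap R.subtype
  have hP00 : M.comap R.subtype ≠ ⊥ := fun h => hI (le_bot_iff.mp (h ▸ Ideal.comap_mono hIM))
  have hmapP0 : Ideal.map R.subtype (M.comap R.subtype) ≠ ⊥ := by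
    rwa [Ne, Ideal.map_eq_bot_iff_of_injective hf]
  have he1 : 1 ≤ padicExp M (Ideal.map R.subtype (M.comap R.subtype)) :=
    padicExp_pos hM hM0 hmapP0 Ideal.map_comap_le
  have hn1 : 1 ≤ padicExp M I := padicExp_pos hM hM0 hI0 hIM
  set n := padicExp M I with hn_def
  set e := padicExp M (Ideal.map R.subtype (M.comap R.subtype)) with he_def
  rw [← not_iff_not, Set.not_subset]
  push_neg
  constructor
  · rintro ⟨x, ⟨hxR, hxM⟩, hxI⟩
    have hxI' : x ∉ I := hxI
    set x' : ↥R := ⟨x, hxR⟩ with hx'_def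
    have hx0 : x ≠ 0 := fun h => hxI' (h ▸ I.zero_mem)
    have hx'0 : x' ≠ 0 := fun h => hx0 (congrArg Subtype.val h)
    have hspan0 : Ideal.span {x} ≠ (⊥ : Ideal S) := by
      rwa [Ne, Ideal.span_singleton_eq_bot]
    have hspanR0 : Ideal.span {x'} ≠ (⊥ : Ideal ↥R) := by
      rwa [Ne, Ideal.span_singleton_eq_bot]
    set k := padicExp (M.comap R.subtype) (Ideal.span {x'}) with hk_def
    have hvM : padicExp M (Ideal.span {x}) = e * k :=
      padicExp_span_coe R hM hM0 hP00 hx'0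
    have hxMI : Ideal.span {x} * M ≤ I := Ideal.span_singleton_mul_le_iff.mpr hxM
    have hprodne : Ideal.span {x} * M ≠ ⊥ := mul_ne_zero hspan0 hM0
    have hge : n ≤ e * k + 1 := by
      have h := padicExp_mono hM hM0 hprodne hxMI
      rwa [padicExp_mul hM hM0 hspan0 hM0, padicExp_self hM hM0, hvM] at h
    have hQMzero : ∀ Q : Ideal S, Q.IsPrime → Q ≠ ⊥ → Q ≠ M → padicExp Q M = 0 := by
      intro Q hQp hQ0 hQM
      refine padicExp_eq_zero hQp hQ0 hM0 ?_
      intro hMQ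
      exact hQM ((hM.isMaximal hM0).eq_of_le hQp.ne_top hMQ).symm
    have hlt : e * k < n := by
      by_contra h
      push_neg at h
      apply hxI'
      rw [← Ideal.span_singleton_le_iff_mem]
      apply le_of_padicExp_le hspan0 hI0
      intro Q hQp hQ0
      by_cases hQM : Q = M
      · subst hQM
        rw [hvM]
        exact h
      · by_cases hIQ : I ≤ Q
        · have h2 := padicExp_mono hQp hQ0 hprodne hxMI
          rw [padicExp_mul hQp hQ0 hspan0 hM0, hQMzero Q hQp hQ0 hQM, add_zero] at h2
          exact h2
        · rw [padicExp_eq_zero hQp hQ0 hI0 hIQ]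
          exact Nat.zero_le _
    have heq : e * k + 1 = n := by omega
    have heqZ : ((e : ℤ) * k + 1 : ℤ) = (n : ℤ) := by exact_mod_cast heq
    refine ⟨⟨(k : ℤ), by rw [← heqZ]; ring⟩, ?_⟩
    intro Q hQp hIQ hQM hcom
    have hQ0 : Q ≠ ⊥ := fun h => hI0 (le_bot_iff.mp (h ▸ hIQ))
    have hQR : Q.comap R.subtype ≠ ⊥ := by rw [hcom]; exact hP00
    have hvQ : padicExp Q (Ideal.span {x}) = padicExp Q (Ideal.map R.subtype (Q.comap R.subtype)) * k := by
      rw [padicExp_span_coe R hQp hQ0 hQR hx'0, hcom]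
    have hmapQle : Ideal.map R.subtype (Q.comap R.subtype) ≤ Q := Ideal.map_comap_le
    have hmapQ0 : Ideal.map R.subtype (Q.comap R.subtype) ≠ ⊥ := by
      rwa [Ne, Ideal.map_eq_bot_iff_of_injective hf]
    have heQ1 : 1 ≤ padicExp Q (Ideal.map R.subtype (Q.comap R.subtype)) :=
      padicExp_pos hQp hQ0 hmapQ0 hmapQle
    have hvQI : padicExp Q I ≤ padicExp Q (Ideal.map R.subtype (Q.comap R.subtype)) * k := by
      have h2 := padicExp_mono hQp hQ0 hprodne hxMI
      rwa [padicExp_mul hQp hQ0 hspan0 hM0, hQMzero Q hQp hQ0 hQM, add_zero, hvQ] at h2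
    set eQ := padicExp Q (Ideal.map R.subtype (Q.comap R.subtype)) with heQ_def
    rw [div_le_div_iff₀ (by exact_mod_cast heQ1) (by exact_mod_cast he1)]
    have hnq : (n : ℚ) - 1 = (e : ℚ) * (k : ℚ) := by
      have : ((e : ℚ) * k + 1 : ℚ) = (n : ℚ) := by exact_mod_cast heq
      linarith
    rw [hnq]
    have hcast : (padicExp Q I : ℚ) ≤ (eQ : ℚ) * k := by exact_mod_cast hvQI
    have hepos : (0 : ℚ) ≤ (e : ℚ) := by positivity
    calc (padicExp Q I : ℚ) * e ≤ ((eQ : ℚ) * k) * e :=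
          mul_le_mul_of_nonneg_right hcast hepos
      _ = (e : ℚ) * k * eQ := by ring
  · rintro ⟨hdvd, hall⟩
    obtain ⟨c, hc⟩ := hdvd
    have hcnn : 0 ≤ c := by nlinarith [hc, hn1, he1]
    set k := c.toNat with hk_def
    have heq : n = e * k + 1 := by
      have hck : (c : ℤ) = (k : ℤ) := (Int.toNat_of_nonneg hcnn).symm
      have : (n : ℤ) = (e : ℤ) * (k : ℤ) + 1 := by rw [← hck]; linarith [hc]
      exact_mod_cast this
    obtain ⟨a, haP, haP'⟩ :=
      Ideal.exists_mem_pow_notMem_pow_succ (M.comap R.subtype) hP00 hP0p.ne_top k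
    set F : Finset (Ideal S) := (normalizedFactors I).toFinset with hF_def
    have hFmem : ∀ Q : Ideal S, Q ∈ F ↔ Q.IsPrime ∧ I ≤ Q := by
      intro Q
      rw [hF_def, Multiset.mem_toFinset, Ideal.mem_normalizedFactors_iff hI0]
    set m := ∑ Q ∈ F, padicExp Q I with hm_def
    set T : Finset (Ideal ↥R) := (F.image (Ideal.comap R.subtype)).erase (M.comap R.subtype) with hT_def
    have hTprime : ∀ P ∈ insert (M.comap R.subtype) T, Prime (id P : Ideal ↥R) := by
      intro P hP
      rcases Finset.mem_insert.mp hP with h | h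
      · rw [h]; exact Ideal.prime_of_isPrime hP00 hP0p
      · obtain ⟨hPne, hPim⟩ := Finset.mem_erase.mp h
        obtain ⟨Q, hQF, rfl⟩ := Finset.mem_image.mp hPim
        obtain ⟨hQp, hIQ⟩ := (hFmem Q).mp hQF
        have hpr : (Ideal.comap R.subtype Q).IsPrime := Ideal.IsPrime.comap R.subtype
        have hne : Ideal.comap R.subtype Q ≠ ⊥ := fun hb =>
          hI (le_bot_iff.mp (hb ▸ Ideal.comap_mono hIQ))
        exact Ideal.prime_of_isPrime hne hpr
    obtain ⟨y, hy⟩ := IsDedekindDomain.exists_forall_sub_mem_ideal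
      (s := insert (M.comap R.subtype) T) id (fun P => if P = M.comap R.subtype then k + 1 else m)
      hTprime (fun i _ j _ hij => hij)
      (fun P => if (P : Ideal ↥R) = M.comap R.subtype then a else 0)
    have hyP0 : y - a ∈ (M.comap R.subtype) ^ (k + 1) := by
      have h := hy (M.comap R.subtype) (Finset.mem_insert_self _ _)
      simpa using h
    have hyT : ∀ P ∈ T, y ∈ P ^ m := by
      intro P hP
      have hne := (Finset.mem_erase.mp hP).1
      have h := hy P (Finset.mem_insert_of_mem hP)
      simpa [hne] using h
    have hy0 : y ≠ 0 := by
      intro h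
      apply haP'
      have h2 : (0 : ↥R) - a ∈ (M.comap R.subtype) ^ (k + 1) := h ▸ hyP0
      simpa using neg_mem h2
    have hymem : y ∈ (M.comap R.subtype) ^ k := by
      have h1 : y - a ∈ (M.comap R.subtype) ^ k := Ideal.pow_le_pow_right (Nat.le_succ k) hyP0
      simpa [sub_add_cancel] using add_mem h1 haP
    have hynot : y ∉ (M.comap R.subtype) ^ (k + 1) := by
      intro h
      apply haP'
      simpa [sub_sub_cancel] using sub_mem h hyP0
    have hsy0 : Ideal.span {y} ≠ (⊥ : Ideal ↥R) := by
      rwa [Ne, Ideal.span_singleton_eq_bot]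
    have hky : padicExp (M.comap R.subtype) (Ideal.span {y}) = k := by
      apply le_antisymm
      · by_contra h
        push_neg at h
        apply hynot
        apply (Ideal.span_singleton_le_iff_mem _).mp
        exact (le_pow_padicExp_iff hP0p hP00 hsy0).mpr h
      · exact (le_pow_padicExp_iff hP0p hP00 hsy0).mp
          ((Ideal.span_singleton_le_iff_mem _).mpr hymem)
    have hspan' : Ideal.span {(y : S)} ≠ (⊥ : Ideal S) := by
      rw [Ne, Ideal.span_singleton_eq_bot]
      intro h
      exact hy0 (ZeroMemClass.coe_eq_zero.mp h)
    have claim1 : Ideal.span {(y : S)} * M ≤ I := by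
      apply le_of_padicExp_le (mul_ne_zero hspan' hM0) hI0
      intro Q hQp hQ0
      rw [padicExp_mul hQp hQ0 hspan' hM0]
      by_cases hIQ : I ≤ Q
      · have hQR0 : Ideal.comap R.subtype Q ≠ ⊥ := fun hb =>
          hI (le_bot_iff.mp (hb ▸ Ideal.comap_mono hIQ))
        have hkey := padicExp_span_coe R hQp hQ0 hQR0 hy0
        have hmapQ0 : Ideal.map R.subtype (Ideal.comap R.subtype Q) ≠ ⊥ := by
          rwa [Ne, Ideal.map_eq_bot_iff_of_injective hf]
        by_cases hQM : Q = M
        · subst hQM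
          rw [hky] at hkey
          rw [hkey, padicExp_self hQp hM0, ← hn_def, ← he_def]
          omega
        · by_cases hcom : Ideal.comap R.subtype Q = Ideal.comap R.subtype M
          · have hkQ : padicExp (Ideal.comap R.subtype Q) (Ideal.span {y}) = k := by
              rw [hcom]; exact hky
            rw [hkQ] at hkey
            have heQ1 : 1 ≤ padicExp Q (Ideal.map R.subtype (Ideal.comap R.subtype Q)) :=
              padicExp_pos hQp hQ0 hmapQ0 Ideal.map_comap_le
            have hq := hall Q hQp hIQ hQM hcom
            rw [div_le_div_iff₀ (by exact_mod_cast heQ1) (by exact_mod_cast he1)] at hq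
            have hnq : (n : ℚ) - 1 = (e : ℚ) * (k : ℚ) := by
              have : ((e : ℚ) * k + 1 : ℚ) = (n : ℚ) := by exact_mod_cast heq.symm
              linarith
            rw [hnq] at hq
            set eQ := padicExp Q (Ideal.map R.subtype (Ideal.comap R.subtype Q)) with heQ_def
            have hepos : (0 : ℚ) < (e : ℚ) := by exact_mod_cast he1
            have h2 : (padicExp Q I : ℚ) ≤ (eQ : ℚ) * k := by
              have h3 : (padicExp Q I : ℚ) * e ≤ ((eQ : ℚ) * k) * e := by
                calc (padicExp Q I : ℚ) * e ≤ (e : ℚ) * k * eQ := hq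
                  _ = ((eQ : ℚ) * k) * e := by ring
              exact le_of_mul_le_mul_right h3 hepos
            have h4 : padicExp Q I ≤ eQ * k := by exact_mod_cast h2
            rw [hkey]
            exact h4.trans (Nat.le_add_right _ _)
          · have hcomp : (Ideal.comap R.subtype Q).IsPrime := Ideal.IsPrime.comap R.subtype
            have hPT : Ideal.comap R.subtype Q ∈ T := by
              rw [hT_def]
              exact Finset.mem_erase.mpr ⟨hcom,
                Finset.mem_image.mpr ⟨Q, (hFmem Q).mpr ⟨hQp, hIQ⟩, rfl⟩⟩
            have hym : y ∈ (Ideal.comap R.subtype Q) ^ m := hyT _ hPT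
            have h1 : m ≤ padicExp (Ideal.comap R.subtype Q) (Ideal.span {y}) :=
              (le_pow_padicExp_iff hcomp hQR0 hsy0).mp
                ((Ideal.span_singleton_le_iff_mem _).mpr hym)
            have heQ1 : 1 ≤ padicExp Q (Ideal.map R.subtype (Ideal.comap R.subtype Q)) :=
              padicExp_pos hQp hQ0 hmapQ0 Ideal.map_comap_le
            have hQIm : padicExp Q I ≤ m := by
              rw [hm_def]
              exact Finset.single_le_sum (f := fun Q => padicExp Q I) (fun _ _ => Nat.zero_le _)
                ((hFmem Q).mpr ⟨hQp, hIQ⟩)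
            calc padicExp Q I ≤ m := hQIm
              _ = 1 * m := (one_mul m).symm
              _ ≤ padicExp Q (Ideal.map R.subtype (Ideal.comap R.subtype Q)) *
                    padicExp (Ideal.comap R.subtype Q) (Ideal.span {y}) := Nat.mul_le_mul heQ1 h1
              _ = padicExp Q (Ideal.span {(y : S)}) := hkey.symm
              _ ≤ padicExp Q (Ideal.span {(y : S)}) + padicExp Q M := Nat.le_add_right _ _
      · rw [padicExp_eq_zero hQp hQ0 hI0 hIQ]
        exact Nat.zero_le _
    refine ⟨(y : S), ⟨y.2, ?_⟩, ?_⟩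
    · intro m' hm'
      exact claim1 (Ideal.mul_mem_mul (Ideal.mem_span_singleton_self _) hm')
    · intro h
      have hmem : (y : S) ∈ I := h
      have hle : Ideal.span {(y : S)} ≤ I := (Ideal.span_singleton_le_iff_mem _).mpr hmem
      have h2 := padicExp_mono hM hM0 hspan' hle
      have hkey := padicExp_span_coe R hM hM0 hP00 hy0
      rw [hky] at hkey
      rw [hkey, ← hn_def, ← he_def] at h2
      omega
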